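/- For any real l ≥ 1 and any natural number n ≥ 1, ∫₁^{nl} frac(t/l)/t² dt = (ln(nl))/l − (1/l)·∑_{k=2}^n 1/k. -/

import Mathlib

open MeasureTheory Real

lemma piece_int (l : ℝ) (hl : 1 ≤ l) (k : ℕ) (a b : ℝ) (ha : 0 < a) (hab : a ≤ b)
    (hfr : ∀ t ∈ Set.Ioo a b, Int.fract (t / l) = t / l - k) :
    ∫ t in a..b, Int.fract (t / l) / t ^ 2 =
      (Real.log b - Real.log a) / l + ((k : ℝ) / b - (k : ℝ) / a) := by
  have hl0 : (0 : ℝ) < l := lt_of_lt_of_le one_pos hl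
  have hb0 : 0 < b := lt_of_lt_of_le ha hab
  have step1 : ∫ t in a..b, Int.fract (t / l) / t ^ 2
      = ∫ t in a..b, (1 / (l * t) - (k : ℝ) / t ^ 2) := by
    apply intervalIntegral.integral_congr_ae
    have hbm : ∀ᵐ x ∂(volume : Measure ℝ), x ≠ b := by
      have : (volume : Measure ℝ) {b} = 0 := measure_singleton b
      exact measure_mono_null (fun x hx => by simpa using hx) this
    filter_upwards [hbm] with x hx hxI
    rw [Set.uIoc_of_le hab] at hxI
    have hx2 : x ∈ Set.Ioo a b := ⟨hxI.1, lt_of_le_of_ne hxI.2 hx⟩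
    have hx0 : x ≠ 0 := ne_of_gt (lt_trans ha hx2.1)
    rw [hfr x hx2]
    field_simp
  rw [step1]
  have hderiv : ∀ t ∈ Set.uIcc a b,
      HasDerivAt (fun t => Real.log t / l + (k : ℝ) / t)
        (1 / (l * t) - (k : ℝ) / t ^ 2) t := by
    intro t ht
    rw [Set.uIcc_of_le hab] at ht
    have ht0 : 0 < t := lt_of_lt_of_le ha ht.1
    have h1 : HasDerivAt (fun t => Real.log t / l) (t⁻¹ / l) t :=
      (Real.hasDerivAt_log (ne_of_gt ht0)).div_const l
    have h2 : HasDerivAt (fun t : ℝ => (k : ℝ) / t) ((k : ℝ) * (-(t ^ 2)⁻¹)) t := by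
      simpa [div_eq_mul_inv] using (hasDerivAt_inv (ne_of_gt ht0)).const_mul (k : ℝ)
    exact (h1.add h2).congr_deriv (by ring)
  have hcont : ContinuousOn (fun t : ℝ => 1 / (l * t) - (k : ℝ) / t ^ 2) (Set.uIcc a b) := by
    apply ContinuousOn.sub
    · apply ContinuousOn.div continuousOn_const (by fun_prop)
      intro t ht
      rw [Set.uIcc_of_le hab] at ht
      exact mul_ne_zero (ne_of_gt hl0) (ne_of_gt (lt_of_lt_of_le ha ht.1))
    · apply ContinuousOn.div continuousOn_const (by fun_prop)
      intro t ht
      rw [Set.uIcc_of_le hab] at ht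
      exact pow_ne_zero 2 (ne_of_gt (lt_of_lt_of_le ha ht.1))
  rw [intervalIntegral.integral_eq_sub_of_hasDerivAt hderiv
    (hcont.intervalIntegrable)]
  ring

lemma frac_integrable (l : ℝ) (hl : 1 ≤ l) (a b : ℝ) (ha : 1 ≤ a) (hab : a ≤ b) :
    IntervalIntegrable (fun t => Int.fract (t / l) / t ^ 2) volume a b := by
  rw [intervalIntegrable_iff, Set.uIoc_of_le hab]
  apply Measure.integrableOn_of_bounded (M := 1) (by simp)
  · exact ((measurable_fract.comp (measurable_id.div_const l)).div
      ((measurable_id.pow_const 2))).aestronglyMeasurable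
  · filter_upwards [ae_restrict_mem measurableSet_Ioc] with x hx
    have hx1 : (1 : ℝ) ≤ x := le_of_lt (lt_of_le_of_lt ha hx.1)
    have hx2 : (1 : ℝ) ≤ x ^ 2 := one_le_pow₀ hx1
    rw [Real.norm_eq_abs, abs_div, abs_of_nonneg (Int.fract_nonneg _),
      abs_of_nonneg (by positivity)]
    calc Int.fract (x / l) / x ^ 2 ≤ 1 / x ^ 2 := by
          gcongr
          exact (Int.fract_lt_one _).le
      _ ≤ 1 := by rw [div_le_one (by positivity)]; exact hx2

theorem stmt_4 (l : ℝ) (hl : 1 ≤ l) (n : ℕ) (hn : 1 ≤ n) :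
    ∫ t in Set.Ioo (1 : ℝ) (n * l), Int.fract (t / l) / t ^ 2 =
      Real.log (n * l) / l - (1 / l) * ∑ k ∈ Finset.Icc 2 n, (1 : ℝ) / k := by
  have hl0 : (0 : ℝ) < l := lt_of_lt_of_le one_pos hl
  induction n, hn using Nat.le_induction with
  | base =>
    have hb : (1 : ℝ) ≤ (1 : ℕ) * l := by push_cast; linarith
    rw [← MeasureTheory.integral_Ioc_eq_integral_Ioo,
      ← intervalIntegral.integral_of_le hb]
    have := piece_int l hl 0 1 ((1 : ℕ) * l) one_pos hb (by
      intro t ht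
      push_cast at ht ⊢
      rw [one_mul] at ht
      have h1 : 0 ≤ t / l := div_nonneg (by linarith [ht.1]) hl0.le
      have h2 : t / l < 1 := (div_lt_one hl0).mpr ht.2
      rw [Int.fract_eq_self.mpr ⟨h1, h2⟩]
      simp)
    rw [this]
    simp [Real.log_one]
  | succ n hn ih =>
    have hn1 : (1 : ℝ) ≤ n := by exact_mod_cast hn
    have hnl : (1 : ℝ) ≤ (n : ℝ) * l := by nlinarith
    have hnl' : (n : ℝ) * l ≤ ((n + 1 : ℕ) : ℝ) * l := by
      push_cast; nlinarith
    have hb : (1 : ℝ) ≤ ((n + 1 : ℕ) : ℝ) * l := le_trans hnl hnl'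
    rw [← MeasureTheory.integral_Ioc_eq_integral_Ioo,
      ← intervalIntegral.integral_of_le hb]
    rw [← MeasureTheory.integral_Ioc_eq_integral_Ioo,
      ← intervalIntegral.integral_of_le hnl] at ih
    have hsplit := intervalIntegral.integral_add_adjacent_intervals
      (frac_integrable l hl 1 ((n : ℝ) * l) le_rfl hnl)
      (frac_integrable l hl ((n : ℝ) * l) (((n + 1 : ℕ) : ℝ) * l) hnl hnl')
      (f := fun t => Int.fract (t / l) / t ^ 2)
    rw [← hsplit, ih]
    have hpiece := piece_int l hl n ((n : ℝ) * l) (((n + 1 : ℕ) : ℝ) * l)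
      (by linarith) hnl' (by
        intro t ht
        obtain ⟨ht1, ht2⟩ := ht
        push_cast at ht2
        have h1 : (n : ℝ) ≤ t / l := le_of_lt ((lt_div_iff₀ hl0).mpr (by linarith))
        have h2 : t / l < (n : ℝ) + 1 := (div_lt_iff₀ hl0).mpr (by linarith)
        have hfl : ⌊t / l⌋ = (n : ℤ) := by
          rw [Int.floor_eq_iff]
          push_cast
          exact ⟨h1, h2⟩
        rw [Int.fract, hfl]
        push_cast
        ring)
    rw [hpiece]
    rw [Finset.sum_Icc_succ_top (by omega : 2 ≤ n + 1)]
    have hn0 : (n : ℝ) ≠ 0 := by positivity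
    have hn10 : (n : ℝ) + 1 ≠ 0 := by positivity
    have hlog : Real.log ((n : ℝ) * l) = Real.log ((n : ℝ) * l) := rfl
    push_cast
    field_simp
    ring
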